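/- arXiv:2511.02621 — 6 statements merged into one kernel-verified Lean document; each statement's English description precedes it below -/
import Mathlib

section
/- Let a ∈ ℝ and let v : ℝ → ℝ be four times differentiable. If v satisfies the static generalized mKdV equation v''' − 6 v² v' + a v' = 0 on ℝ, then the function u = v² + v' − a/6 satisfies the static KdV equation u''' − 6 u u' = 0 on ℝ. -/
/-- If `v` satisfies the static generalized mKdV equation `v''' − 6 v² v' + a v' = 0`,
then `u = v² + v' − a/6` satisfies the static KdV equation `u''' − 6 u u' = 0`. -/
theorem miura_maps_mkdv_to_kdv (a : ℝ) (v : ℝ → ℝ)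
    (hv1 : Differentiable ℝ v)
    (hv2 : Differentiable ℝ (deriv v))
    (hv3 : Differentiable ℝ (deriv (deriv v)))
    (hv4 : Differentiable ℝ (deriv (deriv (deriv v))))
    (hmkdv : ∀ x : ℝ,
      deriv (deriv (deriv v)) x - 6 * v x ^ 2 * deriv v x + a * deriv v x = 0)
    (u : ℝ → ℝ) (hu : u = fun x => v x ^ 2 + deriv v x - a / 6) :
    ∀ x : ℝ, deriv (deriv (deriv u)) x - 6 * u x * deriv u x = 0 := by
  have e3 : deriv (deriv (deriv v)) = fun x => 6 * v x ^ 2 * deriv v x - a * deriv v x := by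
    funext x; have := hmkdv x; linarith
  have h1 : ∀ x, HasDerivAt u (2 * v x * deriv v x + deriv (deriv v) x) x := by
    intro x
    rw [hu]
    have h : HasDerivAt (fun x => v x ^ 2 + deriv v x - a / 6)
        (((2 : ℕ) : ℝ) * v x ^ (2 - 1) * deriv v x + deriv (deriv v) x) x :=
      (((hv1 x).hasDerivAt.pow 2).add (hv2 x).hasDerivAt).sub_const _
    simpa using h
  have hu1 : deriv u = fun x => 2 * v x * deriv v x + deriv (deriv v) x :=
    funext fun x => (h1 x).deriv
  have h2 : ∀ x, HasDerivAt (deriv u)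
      (2 * deriv v x * deriv v x + 2 * v x * deriv (deriv v) x
        + deriv (deriv (deriv v)) x) x := by
    intro x
    rw [hu1]
    have hprod : HasDerivAt (fun x => 2 * v x * deriv v x)
        (2 * deriv v x * deriv v x + 2 * v x * deriv (deriv v) x) x := by
      have := (((hv1 x).hasDerivAt.const_mul (2 : ℝ)).fun_mul (hv2 x).hasDerivAt)
      convert this using 1
    exact hprod.add (hv3 x).hasDerivAt
  have hu2 : deriv (deriv u) = fun x =>
      2 * deriv v x * deriv v x + 2 * v x * deriv (deriv v) x + deriv (deriv (deriv v)) x :=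
    funext fun x => (h2 x).deriv
  have h4 : ∀ x, HasDerivAt (deriv (deriv (deriv v)))
      (12 * v x * deriv v x * deriv v x + 6 * v x ^ 2 * deriv (deriv v) x
        - a * deriv (deriv v) x) x := by
    intro x
    rw [e3]
    have hA : HasDerivAt (fun x => 6 * v x ^ 2 * deriv v x)
        (6 * (((2 : ℕ) : ℝ) * v x ^ (2 - 1) * deriv v x) * deriv v x
          + 6 * v x ^ 2 * deriv (deriv v) x) x :=
      (((hv1 x).hasDerivAt.pow 2).const_mul (6 : ℝ)).mul (hv2 x).hasDerivAt
    have hB : HasDerivAt (fun x => a * deriv v x) (a * deriv (deriv v) x) x :=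
      (hv2 x).hasDerivAt.const_mul a
    have := hA.fun_sub hB
    refine this.congr_deriv ?_; push_cast; ring
  have h3 : ∀ x, HasDerivAt (deriv (deriv u))
      (2 * deriv (deriv v) x * deriv v x + 2 * deriv v x * deriv (deriv v) x
        + (2 * deriv v x * deriv (deriv v) x + 2 * v x * deriv (deriv (deriv v)) x)
        + (12 * v x * deriv v x * deriv v x + 6 * v x ^ 2 * deriv (deriv v) x
            - a * deriv (deriv v) x)) x := by
    intro x
    rw [hu2]
    have hA : HasDerivAt (fun x => 2 * deriv v x * deriv v x)
        (2 * deriv (deriv v) x * deriv v x + 2 * deriv v x * deriv (deriv v) x) x := by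
      have := (((hv2 x).hasDerivAt.const_mul (2 : ℝ)).fun_mul (hv2 x).hasDerivAt)
      convert this using 1
    have hB : HasDerivAt (fun x => 2 * v x * deriv (deriv v) x)
        (2 * deriv v x * deriv (deriv v) x + 2 * v x * deriv (deriv (deriv v)) x) x := by
      have := (((hv1 x).hasDerivAt.const_mul (2 : ℝ)).fun_mul (hv3 x).hasDerivAt)
      convert this using 1
    exact (hA.add hB).add (h4 x)
  intro x
  rw [(h3 x).deriv, hu1, e3]
  simp only [hu]
  ring
end

section
/- Let a ∈ ℝ and let v : ℝ → ℝ be three times differentiable. Define u : ℝ → ℝ by the square transformation u = 2 v² − 2a/3. Then the identity u''' − 6 u u' = (4 v (d/dx) + 12 v')(v'' − 2 v³ + a v) holds on ℝ, i.e. for all x, u'''(x) − 6 u(x) u'(x) = 4 v(x)(v'''(x) − 6 v(x)² v'(x) + a v'(x)) + 12 v'(x)(v''(x) − 2 v(x)³ + a v(x)). -/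
/-- Square transformation identity: for `u = 2 v² − 2a/3`, one has
`u''' − 6 u u' = (4 v d/dx + 12 v')(v'' − 2 v³ + a v)`. -/
theorem square_transformation_identity (a : ℝ) (v : ℝ → ℝ)
    (hv1 : Differentiable ℝ v)
    (hv2 : Differentiable ℝ (deriv v))
    (hv3 : Differentiable ℝ (deriv (deriv v)))
    (u : ℝ → ℝ) (hu : u = fun x => 2 * v x ^ 2 - 2 * a / 3) :
    ∀ x : ℝ,
      deriv (deriv (deriv u)) x - 6 * u x * deriv u x
        = 4 * v x *
            (deriv (deriv (deriv v)) x - 6 * v x ^ 2 * deriv v x + a * deriv v x)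
          + 12 * deriv v x * (deriv (deriv v) x - 2 * v x ^ 3 + a * v x) := by
  have h1 : deriv u = fun x => 4 * v x * deriv v x := by
    funext x
    have h : HasDerivAt u (2 * ((2 : ℕ) * v x ^ 1 * deriv v x) - 0) x := by
      rw [hu]
      exact (((hv1 x).hasDerivAt.pow 2).const_mul 2).sub (hasDerivAt_const x (2 * a / 3))
    rw [h.deriv]; push_cast; ring
  have h2 : deriv (deriv u) = fun x =>
      4 * deriv v x * deriv v x + 4 * v x * deriv (deriv v) x := by
    funext x
    have h : HasDerivAt (deriv u)
        (4 * deriv v x * deriv v x + (4 * v x) * deriv (deriv v) x) x := by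
      rw [h1]
      have := ((hv1 x).hasDerivAt.const_mul 4).mul (hv2 x).hasDerivAt
      exact this.congr_deriv (by ring)
    rw [h.deriv]
  intro x
  have h3 : HasDerivAt (deriv (deriv u))
      ((4 * deriv (deriv v) x * deriv v x + 4 * deriv v x * deriv (deriv v) x)
        + (4 * deriv v x * deriv (deriv v) x + 4 * v x * deriv (deriv (deriv v)) x)) x := by
    rw [h2]
    exact (((hv2 x).hasDerivAt.const_mul 4).mul (hv2 x).hasDerivAt).add
      (((hv1 x).hasDerivAt.const_mul 4).mul (hv3 x).hasDerivAt)
  rw [h3.deriv, h1, hu]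
  ring
end

section
/- Let a ∈ ℝ and let v : ℝ → ℝ be three times differentiable. If v satisfies v'' − 2 v³ + a v = 0 on ℝ, then the function u = 2 v² − 2a/3 satisfies the static KdV equation u''' − 6 u u' = 0 on ℝ. -/
/-- If `v` satisfies `v'' − 2 v³ + a v = 0`, then `u = 2 v² − 2a/3`
satisfies the static KdV equation `u''' − 6 u u' = 0`. -/
theorem square_maps_to_kdv (a : ℝ) (v : ℝ → ℝ)
    (hv1 : Differentiable ℝ v)
    (hv2 : Differentiable ℝ (deriv v))
    (hv3 : Differentiable ℝ (deriv (deriv v)))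
    (heq : ∀ x : ℝ, deriv (deriv v) x - 2 * v x ^ 3 + a * v x = 0)
    (u : ℝ → ℝ) (hu : u = fun x => 2 * v x ^ 2 - 2 * a / 3) :
    ∀ x : ℝ, deriv (deriv (deriv u)) x - 6 * u x * deriv u x = 0 := by
  have h2 : deriv (deriv v) = fun x => 2 * v x ^ 3 - a * v x :=
    funext fun x => by linarith [heq x]
  -- first derivative
  have du : deriv u = fun x => 4 * v x * deriv v x := by
    funext x
    have H : HasDerivAt u (4 * v x * deriv v x) x := by
      rw [hu]
      have := (((hv1 x).hasDerivAt.pow 2).const_mul 2).sub_const (2 * a / 3)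
      refine this.congr_deriv ?_
      ring
    exact H.deriv
  -- second derivative
  have ddu : deriv (deriv u) = fun x => 4 * deriv v x ^ 2 + 8 * v x ^ 4 - 4 * a * v x ^ 2 := by
    funext x
    rw [du]
    have H : HasDerivAt (fun x => 4 * v x * deriv v x)
        (4 * deriv v x ^ 2 + 8 * v x ^ 4 - 4 * a * v x ^ 2) x := by
      have := (((hv1 x).hasDerivAt.const_mul 4).mul (hv2 x).hasDerivAt)
      refine this.congr_deriv ?_
      rw [h2]
      ring
    exact H.deriv
  intro x
  have H3 : HasDerivAt (deriv (deriv u)) (48 * v x ^ 3 * deriv v x - 16 * a * v x * deriv v x) x := by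
    rw [ddu]
    have hvx := (hv1 x).hasDerivAt
    have hdvx := (hv2 x).hasDerivAt
    have := (((hdvx.pow 2).const_mul 4).add ((hvx.pow 4).const_mul 8)).sub
      ((hvx.pow 2).const_mul (4 * a))
    refine this.congr_deriv ?_
    rw [h2]
    ring
  rw [H3.deriv, du, hu]
  ring
end

section
/- Let a ∈ ℝ and let v : ℝ → ℝ be three times differentiable and nowhere zero. If v satisfies the first-order equation (v')² − v⁴ + a v² − 1/2 = 0 on ℝ, then the function u = 1/v² − 2a/3 (the inverse square transformation) satisfies the static KdV equation u''' − 6 u u' = 0 on ℝ. -/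
open Topology Filter Set

/-- Inverse square transformation: if `v` is nowhere zero and satisfies
`(v')² − v⁴ + a v² − 1/2 = 0`, then `u = 1/v² − 2a/3` satisfies the static
KdV equation `u''' − 6 u u' = 0`. -/
theorem inverse_square_maps_to_kdv (a : ℝ) (v : ℝ → ℝ)
    (hv1 : Differentiable ℝ v)
    (hv2 : Differentiable ℝ (deriv v))
    (hv3 : Differentiable ℝ (deriv (deriv v)))
    (hvz : ∀ x : ℝ, v x ≠ 0)
    (heq : ∀ x : ℝ, (deriv v x) ^ 2 - v x ^ 4 + a * v x ^ 2 - 1 / 2 = 0)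
    (u : ℝ → ℝ) (hu : u = fun x => 1 / v x ^ 2 - 2 * a / 3) :
    ∀ x : ℝ, deriv (deriv (deriv u)) x - 6 * u x * deriv u x = 0 := by
  have hdv : ∀ x, HasDerivAt v (deriv v x) x := fun x => (hv1 x).hasDerivAt
  have hdv2 : ∀ x, HasDerivAt (deriv v) (deriv (deriv v) x) x := fun x => (hv2 x).hasDerivAt
  have hdv3 : ∀ x, HasDerivAt (deriv (deriv v)) (deriv (deriv (deriv v)) x) x :=
    fun x => (hv3 x).hasDerivAt
  -- Step 1: v' * (v'' - 2v³ + a v) = 0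
  have hW : ∀ x, deriv v x * (deriv (deriv v) x - 2 * v x ^ 3 + a * v x) = 0 := by
    intro x
    have h1 := ((((hdv2 x).pow 2).sub ((hdv x).pow 4)).add
        (((hdv x).pow 2).const_mul a)).sub_const (1/2)
    have h2 : (fun y => (deriv v y) ^ 2 - v y ^ 4 + a * v y ^ 2 - 1/2) = (fun _ => (0:ℝ)) := by
      funext y; exact heq y
    have h3 : deriv (fun y => (deriv v y) ^ 2 - v y ^ 4 + a * v y ^ 2 - 1/2) x = _ := h1.deriv
    rw [h2, deriv_const] at h3
    push_cast at h3
    linear_combination -h3 / 2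
  -- W and its derivative
  set W : ℝ → ℝ := fun y => deriv (deriv v) y - 2 * v y ^ 3 + a * v y with hWdef
  have hWd : ∀ x, HasDerivAt W
      (deriv (deriv (deriv v)) x - 6 * v x ^ 2 * deriv v x + a * deriv v x) x := by
    intro x
    have h := ((hdv3 x).sub (((hdv x).pow 3).const_mul 2)).add ((hdv x).const_mul a)
    have h' : HasDerivAt W _ x := h
    convert h' using 1
    push_cast; ring
  have hWcont : Continuous W := by
    exact continuous_iff_continuousAt.2 fun x => (hWd x).continuousAt
  -- Step 2: v''' - 6v²v' + a v' = 0 everywhere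
  have hW0 : ∀ x, deriv (deriv (deriv v)) x - 6 * v x ^ 2 * deriv v x + a * deriv v x = 0 := by
    intro x
    set S : Set ℝ := {y | deriv v y ≠ 0} with hS
    have hSopen : IsOpen S := isOpen_compl_singleton.preimage hv2.continuous
    have hWS : Set.EqOn W (fun _ => (0:ℝ)) S := by
      intro y hy
      have := hW y
      exact (mul_eq_zero.mp this).resolve_left hy
    by_cases hx : x ∈ closure S
    · -- W = 0 on closure S, and slope argument gives W' x = 0
      have hWx : W x = 0 := hWS.closure hWcont continuous_const hx
      have hx' : x ∈ closure (S \ {x}) := by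
        by_cases hxS : x ∈ S
        · have h1 : 𝓝[S \ {x}] x = 𝓝[≠] x := by
            rw [Set.diff_eq, Set.inter_comm]
            exact (nhdsWithin_restrict' _ (hSopen.mem_nhds hxS)).symm
          apply mem_closure_iff_nhdsWithin_neBot.mpr
          rw [h1]
          exact inferInstance
        · rwa [Set.diff_singleton_eq_self hxS]
      have hne : (𝓝[S \ {x}] x).NeBot := mem_closure_iff_nhdsWithin_neBot.mp hx'
      have ht : Filter.Tendsto (slope W x) (𝓝[S \ {x}] x)
          (𝓝 (deriv (deriv (deriv v)) x - 6 * v x ^ 2 * deriv v x + a * deriv v x)) :=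
        (hasDerivAt_iff_tendsto_slope.mp (hWd x)).mono_left
          (nhdsWithin_mono x (fun y hy => hy.2))
      have ht0 : Filter.Tendsto (slope W x) (𝓝[S \ {x}] x) (𝓝 0) := by
        apply Filter.Tendsto.congr' _ tendsto_const_nhds
        filter_upwards [self_mem_nhdsWithin] with y hy
        simp [slope, hWS hy.1, hWx]
      exact tendsto_nhds_unique ht ht0
    · -- x in interior of {v' = 0}: v' ≡ 0 near x, so all higher derivs vanish at x
      have hmem : x ∈ interior Sᶜ := by
        rw [interior_compl]; exact hx
      have hev1 : deriv v =ᶠ[𝓝 x] (fun _ => 0) := by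
        filter_upwards [isOpen_interior.mem_nhds hmem] with y hy
        have : y ∈ Sᶜ := interior_subset hy
        simpa [hS] using this
      have hv1x : deriv v x = 0 := hev1.self_of_nhds
      have hev2 : deriv (deriv v) =ᶠ[𝓝 x] (fun _ => 0) := by
        filter_upwards [isOpen_interior.mem_nhds hmem] with y hy
        have hev1' : deriv v =ᶠ[𝓝 y] (fun _ => 0) := by
          filter_upwards [isOpen_interior.mem_nhds hy] with z hz
          have : z ∈ Sᶜ := interior_subset hz
          simpa [hS] using this
        calc deriv (deriv v) y = deriv (fun _ => (0:ℝ)) y := hev1'.deriv_eq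
          _ = 0 := deriv_const y 0
      have hv3x : deriv (deriv (deriv v)) x = 0 := by
        calc deriv (deriv (deriv v)) x = deriv (fun _ => (0:ℝ)) x := hev2.deriv_eq
          _ = 0 := deriv_const x 0
      rw [hv1x, hv3x]; ring
  -- Derivatives of u
  have hU1 : deriv u = fun x => -2 * deriv v x / v x ^ 3 := by
    funext x
    have hp : HasDerivAt (fun y => v y ^ 2) (2 * v x * deriv v x) x := by
      have h' : HasDerivAt (fun y => v y ^ 2) _ x := (hdv x).pow 2; simpa using h'
    have hinv := hp.inv (pow_ne_zero 2 (hvz x))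
    have h : HasDerivAt u (-(2 * v x * deriv v x) / (v x ^ 2) ^ 2) x := by
      rw [hu]
      simpa [one_div] using hinv.sub_const (2 * a / 3)
    rw [h.deriv]
    have hz := hvz x
    field_simp
  have hU2 : deriv (deriv u) =
      fun x => (-2 * deriv (deriv v) x * v x + 6 * deriv v x ^ 2) / v x ^ 4 := by
    rw [hU1]; funext x
    have hnum : HasDerivAt (fun y => -2 * deriv v y) (-2 * deriv (deriv v) x) x :=
      (hdv2 x).const_mul (-2)
    have hden : HasDerivAt (fun y => v y ^ 3) (3 * v x ^ 2 * deriv v x) x := by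
      have h' : HasDerivAt (fun y => v y ^ 3) _ x := (hdv x).pow 3; simpa using h'
    have h := hnum.div hden (pow_ne_zero 3 (hvz x))
    have h' : HasDerivAt (fun y => -2 * deriv v y / v y ^ 3) _ x := h
    rw [h'.deriv]
    have hz := hvz x
    field_simp
    ring
  intro x
  -- third derivative at x
  have hnum : HasDerivAt (fun y => -2 * deriv (deriv v) y * v y + 6 * deriv v y ^ 2)
      ((-2 * deriv (deriv (deriv v)) x * v x + (-2 * deriv (deriv v) x) * deriv v x)
        + 6 * (2 * deriv v x * deriv (deriv v) x)) x := by
    have h1 : HasDerivAt (fun y => -2 * deriv (deriv v) y * v y)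
        (-2 * deriv (deriv (deriv v)) x * v x + (-2 * deriv (deriv v) x) * deriv v x) x :=
      ((hdv3 x).const_mul (-2)).mul (hdv x)
    have h2 : HasDerivAt (fun y => 6 * deriv v y ^ 2) (6 * (2 * deriv v x * deriv (deriv v) x)) x := by
      have : HasDerivAt (fun y => deriv v y ^ 2) (2 * deriv v x * deriv (deriv v) x) x := by
        have h' : HasDerivAt (fun y => deriv v y ^ 2) _ x := (hdv2 x).pow 2; simpa using h'
      exact this.const_mul 6
    exact h1.add h2
  have hden : HasDerivAt (fun y => v y ^ 4) (4 * v x ^ 3 * deriv v x) x := by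
    have h' : HasDerivAt (fun y => v y ^ 4) _ x := (hdv x).pow 4; simpa using h'
  have h3 := hnum.div hden (pow_ne_zero 4 (hvz x))
  have h3' : HasDerivAt (fun y => (-2 * deriv (deriv v) y * v y + 6 * deriv v y ^ 2) / v y ^ 4) _ x := h3
  rw [hU2, h3'.deriv, hU1, hu]
  have hz := hvz x
  have e1 := heq x
  have e2 := hW x
  have e3 := hW0 x
  field_simp
  linear_combination (-6 * v x ^ 2) * e3 + (54 * v x) * e2 +
    (-72 * deriv v x) * e1
end

section
/- Let a ∈ ℝ and let v : ℝ → ℝ be three times differentiable and nowhere zero. If v satisfies the first-order equation (v')² − v⁴ + a v² − 2 v = 0 on ℝ, then the function u = 1/v − a/6 (the inverse power transformation) satisfies the static KdV equation u''' − 6 u u' = 0 on ℝ. -/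
/-- Inverse power transformation: if `v` is nowhere zero and satisfies
`(v')² − v⁴ + a v² − 2 v = 0`, then `u = 1/v − a/6` satisfies the static
KdV equation `u''' − 6 u u' = 0`. -/
theorem inverse_power_maps_to_kdv (a : ℝ) (v : ℝ → ℝ)
    (hv1 : Differentiable ℝ v)
    (hv2 : Differentiable ℝ (deriv v))
    (hv3 : Differentiable ℝ (deriv (deriv v)))
    (hvz : ∀ x : ℝ, v x ≠ 0)
    (heq : ∀ x : ℝ, (deriv v x) ^ 2 - v x ^ 4 + a * v x ^ 2 - 2 * v x = 0)
    (u : ℝ → ℝ) (hu : u = fun x => 1 / v x - a / 6) :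
    ∀ x : ℝ, deriv (deriv (deriv u)) x - 6 * u x * deriv u x = 0 := by
  -- First derivative of u: u' = -v'/v²
  have hu' : ∀ x : ℝ, HasDerivAt u (-(deriv v x) / (v x) ^ 2) x := by
    intro x
    have h := ((hasDerivAt_const x (1:ℝ)).div (hv1 x).hasDerivAt (hvz x)).sub_const (a/6)
    rw [hu]
    refine h.congr_deriv ?_
    ring
  -- Differentiating the first-order equation:  v' * (v'' - (2v³ - a v + 1)) = 0
  have hvw : ∀ x : ℝ, deriv v x * (deriv (deriv v) x - (2 * (v x)^3 - a * v x + 1)) = 0 := by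
    intro x
    have hF : (fun x => (deriv v x) ^ 2 - v x ^ 4 + a * v x ^ 2 - 2 * v x) = fun _ => (0:ℝ) :=
      funext heq
    have hD : HasDerivAt (fun x => (deriv v x) ^ 2 - v x ^ 4 + a * v x ^ 2 - 2 * v x)
        (2 * deriv v x ^ 1 * deriv (deriv v) x - 4 * v x ^ 3 * deriv v x
          + a * (2 * v x ^ 1 * deriv v x) - 2 * deriv v x) x := by
      exact ((((hv2 x).hasDerivAt.pow 2).sub ((hv1 x).hasDerivAt.pow 4)).add
        (((hv1 x).hasDerivAt.pow 2).const_mul a)).sub ((hv1 x).hasDerivAt.const_mul 2)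
    rw [hF] at hD
    have h0 := (hasDerivAt_const x (0:ℝ)).unique hD
    nlinarith [h0]
  by_cases hB : ∀ x : ℝ, deriv (deriv v) x = 2 * (v x)^3 - a * v x + 1
  · -- Main case: v'' = 2v³ - a v + 1 everywhere.
    have e1 : deriv u = fun x => -(deriv v x) / (v x) ^ 2 := funext fun x => (hu' x).deriv
    have hu'' : ∀ x : ℝ, HasDerivAt (deriv u) ((3 - a * v x) / (v x) ^ 2) x := by
      intro x
      rw [e1]
      have h := ((hv2 x).hasDerivAt.neg).div ((hv1 x).hasDerivAt.pow 2)
        (pow_ne_zero 2 (hvz x))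
      refine h.congr_deriv ?_
      simp only [Pi.pow_apply, Pi.neg_apply]
      have h1 := heq x
      rw [hB x]
      have hv := hvz x
      field_simp
      linear_combination (2 * v x) * h1
    have e2 : deriv (deriv u) = fun x => (3 - a * v x) / (v x) ^ 2 :=
      funext fun x => (hu'' x).deriv
    have hu''' : ∀ x : ℝ, HasDerivAt (deriv (deriv u))
        ((a * v x - 6) * deriv v x / (v x) ^ 3) x := by
      intro x
      rw [e2]
      have h := (((hv1 x).hasDerivAt.const_mul a).const_sub 3).div
        ((hv1 x).hasDerivAt.pow 2) (pow_ne_zero 2 (hvz x))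
      refine h.congr_deriv ?_
      simp only [Pi.pow_apply, Pi.neg_apply]
      have hv := hvz x
      field_simp
      ring
    intro x
    rw [(hu''' x).deriv, (hu' x).deriv, hu]
    have hv := hvz x
    rw [sub_eq_zero]
    field_simp
    ring
  · -- Degenerate case: v'' - (2v³ - a v + 1) is nonzero somewhere, so v is constant.
    push_neg at hB
    obtain ⟨x₀, hx₀⟩ := hB
    set w : ℝ → ℝ := fun x => deriv (deriv v) x - (2 * (v x)^3 - a * v x + 1) with hw
    have hwx₀ : w x₀ ≠ 0 := sub_ne_zero_of_ne hx₀
    have hwc : Continuous w := by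
      apply (hv3.continuous).sub
      have := hv1.continuous
      continuity
    have hclopen : IsClopen {x : ℝ | w x = w x₀} := by
      constructor
      · exact isClosed_eq hwc continuous_const
      · rw [isOpen_iff_mem_nhds]
        intro x hx
        have hxw : w x = w x₀ := hx
        have hwx : w x ≠ 0 := by rw [hxw]; exact hwx₀
        have hev : ∀ᶠ y in nhds x, w y ≠ 0 := hwc.continuousAt.eventually_ne hwx
        obtain ⟨ε, hε, hball⟩ := Metric.eventually_nhds_iff_ball.mp hev
        have hdv0 : ∀ y ∈ Metric.ball x ε, deriv v y = 0 := by
          intro y hy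
          rcases mul_eq_zero.mp (hvw y) with h | h
          · exact h
          · exact absurd h (hball y hy)
        have hvconst : ∀ y ∈ Metric.ball x ε, v y = v x := by
          intro y hy
          refine (convex_ball x ε).is_const_of_fderivWithin_eq_zero
            (hv1.differentiableOn) (fun z hz => ?_) hy (Metric.mem_ball_self hε)
          rw [fderivWithin_of_isOpen Metric.isOpen_ball hz]
          have h0 : HasDerivAt v 0 z := by
            have := (hv1 z).hasDerivAt
            rwa [hdv0 z hz] at this
          have := h0.hasFDerivAt.fderiv
          rw [this]
          ext
          simp
        have hddv0 : ∀ y ∈ Metric.ball x ε, deriv (deriv v) y = 0 := by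
          intro y hy
          have hev2 : deriv v =ᶠ[nhds y] fun _ => (0:ℝ) :=
            Filter.eventuallyEq_of_mem (Metric.isOpen_ball.mem_nhds hy) hdv0
          rw [hev2.deriv_eq, deriv_const]
        refine Filter.mem_of_superset (Metric.ball_mem_nhds x hε) (fun y hy => ?_)
        show w y = w x₀
        rw [← hxw]
        show deriv (deriv v) y - (2 * (v y)^3 - a * v y + 1)
          = deriv (deriv v) x - (2 * (v x)^3 - a * v x + 1)
        rw [hddv0 y hy, hddv0 x (Metric.mem_ball_self hε), hvconst y hy]
    have huniv : {x : ℝ | w x = w x₀} = Set.univ :=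
      hclopen.eq_univ ⟨x₀, rfl⟩
    have hdv : ∀ x : ℝ, deriv v x = 0 := by
      intro x
      have hxmem : w x = w x₀ := by
        have : x ∈ {x : ℝ | w x = w x₀} := huniv ▸ Set.mem_univ x
        exact this
      rcases mul_eq_zero.mp (hvw x) with h | h
      · exact h
      · exact absurd h (by
          rw [show (deriv (deriv v) x - (2 * (v x)^3 - a * v x + 1)) = w x from rfl, hxmem]
          exact hwx₀)
    have e1 : deriv u = fun _ => (0:ℝ) := funext fun x => by
      rw [(hu' x).deriv, hdv x]; simp
    intro x
    rw [e1]
    simp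
end

section
/- Let v : ℝ × ℝ → ℝ be smooth (arguments (x,t)) and let η, b ∈ ℝ. Define the 2×2 real matrix-valued functions L = [[η, v], [−v, −η]] and M = [[A, B], [C, −A]] with A = −2η v² − 4η³ b, B = −v_xx − 2η v_x − 2 v³ − 4η² b v, C = v_xx − 2η v_x + 2 v³ + 4η² b v (subscripts denoting partial x-derivatives). Then the zero-curvature expression satisfies ∂L/∂t − ∂M/∂x + LM − ML = [[0, D], [−D, 0]], where D = v_t + v_xxx + 6 v² v_x + 4η²(b − 1) v_x. -/
/-- Partial derivative in the first (space) variable. -/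
noncomputable def px (f : ℝ × ℝ → ℝ) (p : ℝ × ℝ) : ℝ :=
  deriv (fun x => f (x, p.2)) p.1

/-- Partial derivative in the second (time) variable. -/
noncomputable def pt (f : ℝ × ℝ → ℝ) (p : ℝ × ℝ) : ℝ :=
  deriv (fun t => f (p.1, t)) p.2

/-- AKNS zero-curvature identity for the generalized mKdV equation:
with `L = [[η, v], [−v, −η]]`, `M = [[A, B], [C, −A]]`,
`A = −2η v² − 4η³ b`, `B = −v_xx − 2η v_x − 2v³ − 4η² b v`,
`C = v_xx − 2η v_x + 2v³ + 4η² b v`, one has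
`∂L/∂t − ∂M/∂x + L M − M L = [[0, D], [−D, 0]]` where
`D = v_t + v_xxx + 6 v² v_x + 4η²(b−1) v_x`. -/
theorem akns_zero_curvature (v : ℝ × ℝ → ℝ) (hv : ContDiff ℝ (⊤ : ℕ∞) v)
    (η b : ℝ)
    (L M : ℝ × ℝ → Matrix (Fin 2) (Fin 2) ℝ)
    (hL : L = fun p => !![η, v p; -v p, -η])
    (A B C : ℝ × ℝ → ℝ)
    (hA : A = fun p => -2 * η * v p ^ 2 - 4 * η ^ 3 * b)
    (hB : B = fun p => -px (px v) p - 2 * η * px v p - 2 * v p ^ 3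
        - 4 * η ^ 2 * b * v p)
    (hC : C = fun p => px (px v) p - 2 * η * px v p + 2 * v p ^ 3
        + 4 * η ^ 2 * b * v p)
    (hM : M = fun p => !![A p, B p; C p, -A p])
    (D : ℝ × ℝ → ℝ)
    (hD : D = fun p => pt v p + px (px (px v)) p + 6 * v p ^ 2 * px v p
        + 4 * η ^ 2 * (b - 1) * px v p) :
    ∀ p : ℝ × ℝ,
      (Matrix.of fun i j => pt (fun q => L q i j) p)
        - (Matrix.of fun i j => px (fun q => M q i j) p)
        + L p * M p - M p * L p
      = !![0, D p; -D p, 0] := by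
  subst hL hA hB hC hM hD
  intro p
  obtain ⟨x, t⟩ := p
  set w : ℝ → ℝ := fun y => v (y, t) with hw_def
  have hw : ContDiff ℝ (⊤ : ℕ∞) w := hv.comp (contDiff_id.prodMk contDiff_const)
  have h1 : Differentiable ℝ w := hw.differentiable (by simp)
  have hw1 : ContDiff ℝ (⊤ : ℕ∞) (deriv w) := (contDiff_infty_iff_deriv.mp hw).2
  have h2 : Differentiable ℝ (deriv w) := hw1.differentiable (by simp)
  have hw2 : ContDiff ℝ (⊤ : ℕ∞) (deriv (deriv w)) := (contDiff_infty_iff_deriv.mp hw1).2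
  have h3 : Differentiable ℝ (deriv (deriv w)) := hw2.differentiable (by simp)
  have e1 : ∀ y, px v (y, t) = deriv w y := fun _ => rfl
  have e2 : ∀ y, px (px v) (y, t) = deriv (deriv w) y := fun _ => rfl
  have e3 : ∀ y, px (px (px v)) (y, t) = deriv (deriv (deriv w)) y := fun _ => rfl
  -- time derivative of v
  have hvt : pt (fun q => -v q) (x, t) = -pt v (x, t) := by
    have hd : DifferentiableAt ℝ (fun s => v (x, s)) t :=
      ((hv.differentiable (by simp)).comp ((differentiable_const x).prodMk differentiable_id)) t
    show deriv (fun s => -v (x, s)) t = -deriv (fun s => v (x, s)) t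
    exact (hd.hasDerivAt.neg).deriv
  -- x-derivative of A
  have hpA : px (fun p => -2 * η * v p ^ 2 - 4 * η ^ 3 * b) (x, t)
      = -4 * η * v (x, t) * px v (x, t) := by
    show deriv (fun y => -2 * η * v (y, t) ^ 2 - 4 * η ^ 3 * b) x = _
    rw [e1]
    have : HasDerivAt (fun y => -2 * η * w y ^ 2 - 4 * η ^ 3 * b)
        (-4 * η * w x * deriv w x) x := by
      have := (((h1 x).hasDerivAt.pow 2).const_mul (-2 * η)).sub_const (4 * η ^ 3 * b)
      exact this.congr_deriv (by ring)
    exact this.deriv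
  -- x-derivative of B
  have hpB : px (fun p => -px (px v) p - 2 * η * px v p - 2 * v p ^ 3
        - 4 * η ^ 2 * b * v p) (x, t)
      = -px (px (px v)) (x,t) - 2 * η * px (px v) (x,t)
        - 6 * v (x,t) ^ 2 * px v (x,t) - 4 * η ^ 2 * b * px v (x,t) := by
    show deriv (fun y => -px (px v) (y, t) - 2 * η * px v (y, t) - 2 * v (y, t) ^ 3
        - 4 * η ^ 2 * b * v (y, t)) x = _
    simp only [e1, e2, e3]
    have : HasDerivAt (fun y => -deriv (deriv w) y - 2 * η * deriv w y - 2 * w y ^ 3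
        - 4 * η ^ 2 * b * w y)
        (-deriv (deriv (deriv w)) x - 2 * η * deriv (deriv w) x
          - 6 * w x ^ 2 * deriv w x - 4 * η ^ 2 * b * deriv w x) x := by
      have := ((((h3 x).hasDerivAt.neg.sub (((h2 x).hasDerivAt).const_mul (2 * η))).sub
          (((h1 x).hasDerivAt.pow 3).const_mul 2)).sub (((h1 x).hasDerivAt).const_mul (4 * η ^ 2 * b)))
      exact this.congr_deriv (by ring)
    exact this.deriv
  -- x-derivative of C
  have hpC : px (fun p => px (px v) p - 2 * η * px v p + 2 * v p ^ 3
        + 4 * η ^ 2 * b * v p) (x, t)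
      = px (px (px v)) (x,t) - 2 * η * px (px v) (x,t)
        + 6 * v (x,t) ^ 2 * px v (x,t) + 4 * η ^ 2 * b * px v (x,t) := by
    show deriv (fun y => px (px v) (y, t) - 2 * η * px v (y, t) + 2 * v (y, t) ^ 3
        + 4 * η ^ 2 * b * v (y, t)) x = _
    simp only [e1, e2, e3]
    have : HasDerivAt (fun y => deriv (deriv w) y - 2 * η * deriv w y + 2 * w y ^ 3
        + 4 * η ^ 2 * b * w y)
        (deriv (deriv (deriv w)) x - 2 * η * deriv (deriv w) x
          + 6 * w x ^ 2 * deriv w x + 4 * η ^ 2 * b * deriv w x) x := by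
      have := ((((h3 x).hasDerivAt.sub (((h2 x).hasDerivAt).const_mul (2 * η))).add
          (((h1 x).hasDerivAt.pow 3).const_mul 2)).add (((h1 x).hasDerivAt).const_mul (4 * η ^ 2 * b)))
      exact this.congr_deriv (by ring)
    exact this.deriv
  have hpnA : px (fun p => -(-2 * η * v p ^ 2 - 4 * η ^ 3 * b)) (x, t)
      = 4 * η * v (x, t) * px v (x, t) := by
    show deriv (fun y => -(-2 * η * v (y, t) ^ 2 - 4 * η ^ 3 * b)) x = _
    rw [e1]
    have : HasDerivAt (fun y => -(-2 * η * w y ^ 2 - 4 * η ^ 3 * b))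
        (4 * η * w x * deriv w x) x := by
      have := ((((h1 x).hasDerivAt.pow 2).const_mul (-2 * η)).sub_const (4 * η ^ 3 * b)).neg
      exact this.congr_deriv (by ring)
    exact this.deriv
  have hconst : ∀ c : ℝ, pt (fun _ : ℝ × ℝ => c) (x, t) = 0 := fun c => by
    show deriv (fun _ : ℝ => c) t = 0
    simp
  ext i j
  fin_cases i <;> fin_cases j <;>
    simp only [Matrix.cons_val', Matrix.cons_val_zero, Matrix.cons_val_one, Matrix.head_cons,
      Matrix.head_fin_const, Matrix.empty_val', Matrix.cons_val_fin_one, Matrix.of_apply,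
      Matrix.sub_apply, Matrix.add_apply, Matrix.mul_apply, Fin.sum_univ_two, Fin.isValue,
      Fin.zero_eta, Fin.mk_one]
  · rw [hconst, hpA]; ring
  · show pt v (x,t) - _ + _ - _ = _
    rw [hpB]; ring
  · rw [hvt, hpC]; ring
  · rw [hconst, hpnA]; ring
end
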